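/- Let H_X ≤ G be a subspace. Say H_X respects weight if there exists σ₀ ⊆ Fin n such that the cosets {e_i + H_X | i ∈ σ₀} of the standard basis vectors form a basis of G/H_X and, for every a ∈ G, min{wt(a + h) | h ∈ H_X} equals the number of nonzero coefficients of a + H_X in that basis. Then H_X respects weight if and only if H_X admits a basis all of whose elements have Hamming weight at most 2. -/

import Mathlib

open Finset

/-- Hamming weight of a vector in `Fin n → ZMod p`. -/
def hwt {p n : ℕ} (a : Fin n → ZMod p) : ℕ :=
  (Finset.univ.filter fun j => a j ≠ 0).card

section aux
variable {p n : ℕ} [Fact p.Prime]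

lemma hwt_single (i : Fin n) : hwt (Pi.single i (1:ZMod p)) = 1 := by
  have : (Finset.univ.filter fun j => (Pi.single i (1:ZMod p) : Fin n → ZMod p) j ≠ 0) = {i} := by
    ext j
    simp [Pi.single_apply]
  simp [hwt, this]

lemma hwt_sub_le (a b : Fin n → ZMod p) : hwt (a - b) ≤ hwt a + hwt b := by
  classical
  have hsub : (Finset.univ.filter fun j => (a-b) j ≠ 0) ⊆
      (Finset.univ.filter fun j => a j ≠ 0) ∪ (Finset.univ.filter fun j => b j ≠ 0) := by
    intro j hj
    simp only [mem_filter, mem_univ, true_and, mem_union] at hj ⊢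
    by_contra hc
    push_neg at hc
    apply hj
    simp [Pi.sub_apply, hc.1, hc.2]
  calc _ ≤ _ := Finset.card_le_card hsub
    _ ≤ _ := Finset.card_union_le _ _

variable {σ₀ : Finset (Fin n)}

def yvec (σ₀ : Finset (Fin n)) (r : σ₀ → ZMod p) : Fin n → ZMod p :=
  ∑ k : σ₀, Pi.single (k : Fin n) (r k)

lemma yvec_apply (r : σ₀ → ZMod p) (j : Fin n) :
    yvec σ₀ r j = if h : j ∈ σ₀ then r ⟨j, h⟩ else 0 := by
  classical
  rw [yvec]
  rw [Finset.sum_apply]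
  by_cases h : j ∈ σ₀
  · rw [dif_pos h]
    rw [Finset.sum_eq_single (⟨j, h⟩ : σ₀)]
    · simp
    · intro k _ hk
      apply Pi.single_eq_of_ne
      intro hc
      exact hk (Subtype.ext hc.symm)
    · simp
  · rw [dif_neg h]
    apply Finset.sum_eq_zero
    intro k _
    apply Pi.single_eq_of_ne
    intro hc
    exact h (hc ▸ k.2)

lemma hwt_yvec (r : σ₀ →₀ ZMod p) : hwt (yvec σ₀ ⇑r) = r.support.card := by
  classical
  have hmem : ∀ j, yvec σ₀ r j ≠ 0 → j ∈ σ₀ := by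
    intro j hj
    by_contra h
    rw [yvec_apply, dif_neg h] at hj; exact hj rfl
  unfold hwt
  apply Finset.card_bij (fun j hj => (⟨j, hmem j (by simpa using hj)⟩ : σ₀))
  · intro j hj
    simp only [mem_filter, mem_univ, true_and] at hj
    rw [Finsupp.mem_support_iff]
    have := hj
    rw [yvec_apply, dif_pos (hmem j hj)] at this
    exact this
  · intro j1 h1 j2 h2 he
    exact congrArg Subtype.val he
  · intro k hk
    refine ⟨k, ?_, ?_⟩
    · simp only [mem_filter, mem_univ, true_and]
      rw [yvec_apply, dif_pos k.2]
      simpa using Finsupp.mem_support_iff.mp hk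
    · simp

variable {HX : Submodule (ZMod p) (Fin n → ZMod p)}

lemma mk_yvec (B : Module.Basis σ₀ (ZMod p) ((Fin n → ZMod p) ⧸ HX))
    (hB : ∀ i : σ₀, B i = Submodule.Quotient.mk (Pi.single (i : Fin n) (1 : ZMod p)))
    (r : σ₀ → ZMod p) :
    (Submodule.Quotient.mk (yvec σ₀ r) : (Fin n → ZMod p) ⧸ HX) = ∑ k : σ₀, r k • B k := by
  have h0 : (Submodule.Quotient.mk (yvec σ₀ r) : (Fin n → ZMod p) ⧸ HX)
      = HX.mkQ (yvec σ₀ r) := rfl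
  rw [h0, yvec, map_sum]
  apply Finset.sum_congr rfl
  intro k _
  have h1 : Pi.single (k : Fin n) (r k)
      = r k • (Pi.single (k : Fin n) (1 : ZMod p) : Fin n → ZMod p) := by
    rw [← Pi.single_smul, smul_eq_mul, mul_one]
  rw [h1, map_smul, hB k]
  rfl

lemma mk_yvec_repr (B : Module.Basis σ₀ (ZMod p) ((Fin n → ZMod p) ⧸ HX))
    (hB : ∀ i : σ₀, B i = Submodule.Quotient.mk (Pi.single (i : Fin n) (1 : ZMod p)))
    (x : (Fin n → ZMod p) ⧸ HX) :
    (Submodule.Quotient.mk (yvec σ₀ (B.repr x)) : (Fin n → ZMod p) ⧸ HX) = x := by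
  rw [mk_yvec B hB, B.sum_repr]

lemma sInf_le_card (B : Module.Basis σ₀ (ZMod p) ((Fin n → ZMod p) ⧸ HX))
    (hB : ∀ i : σ₀, B i = Submodule.Quotient.mk (Pi.single (i : Fin n) (1 : ZMod p)))
    (a : Fin n → ZMod p) :
    sInf {w | ∃ h ∈ HX, hwt (a + h) = w}
      ≤ (B.repr (Submodule.Quotient.mk a)).support.card := by
  set r := B.repr (Submodule.Quotient.mk a) with hr
  have hy : (Submodule.Quotient.mk (yvec σ₀ r) : (Fin n → ZMod p) ⧸ HX)
      = Submodule.Quotient.mk a := mk_yvec_repr B hB _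
  have hmem : yvec σ₀ r - a ∈ HX := (Submodule.Quotient.eq HX).mp hy
  apply Nat.sInf_le
  exact ⟨yvec σ₀ r - a, hmem, by rw [add_sub_cancel]; exact hwt_yvec r⟩

lemma forward_dir (B : Module.Basis σ₀ (ZMod p) ((Fin n → ZMod p) ⧸ HX))
    (hB : ∀ i : σ₀, B i = Submodule.Quotient.mk (Pi.single (i : Fin n) (1 : ZMod p)))
    (hmain : ∀ a : Fin n → ZMod p,
      sInf {w | ∃ h ∈ HX, hwt (a + h) = w}
        = (B.repr (Submodule.Quotient.mk a)).support.card) :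
    ∃ s : Set (Fin n → ZMod p),
      Submodule.span (ZMod p) s = HX ∧
      LinearIndependent (ZMod p) ((↑) : s → (Fin n → ZMod p)) ∧
      ∀ a ∈ s, hwt a ≤ 2 := by
  classical
  set d : Fin n → (Fin n → ZMod p) := fun i =>
    Pi.single i 1 - yvec σ₀ (B.repr (Submodule.Quotient.mk (Pi.single i 1))) with hd
  have hcard1 : ∀ i : Fin n,
      (B.repr (Submodule.Quotient.mk (Pi.single i (1:ZMod p)))).support.card ≤ 1 := by
    intro i
    rw [← hmain]
    apply Nat.sInf_le
    exact ⟨0, HX.zero_mem, by rw [add_zero, hwt_single]⟩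
  have hdH : ∀ i, d i ∈ HX := by
    intro i
    have : (Submodule.Quotient.mk (yvec σ₀ (B.repr (Submodule.Quotient.mk (Pi.single i 1))))
        : (Fin n → ZMod p) ⧸ HX) = Submodule.Quotient.mk (Pi.single i 1) :=
      mk_yvec_repr B hB _
    have h2 := (Submodule.Quotient.eq HX).mp this.symm
    simpa [hd] using h2
  have hdwt : ∀ i, hwt (d i) ≤ 2 := by
    intro i
    calc hwt (d i) ≤ hwt (Pi.single i (1:ZMod p))
          + hwt (yvec σ₀ (B.repr (Submodule.Quotient.mk (Pi.single i 1)))) := hwt_sub_le _ _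
      _ ≤ 1 + 1 := by
          rw [hwt_single, hwt_yvec]
          exact Nat.add_le_add_left (hcard1 i) 1
      _ = 2 := rfl
  have hdval : ∀ i i₀ : Fin n, i₀ ∉ σ₀ → d i i₀ = if i₀ = i then 1 else 0 := by
    intro i i₀ h₀
    simp only [hd, Pi.sub_apply, yvec_apply, dif_neg h₀, sub_zero, Pi.single_apply]
  set f : (σ₀ᶜ : Finset (Fin n)) → (Fin n → ZMod p) := fun i => d i with hf
  have hind : LinearIndependent (ZMod p) f := by
    rw [Fintype.linearIndependent_iff]
    intro g hg i₀
    have h₀ : (i₀ : Fin n) ∉ σ₀ := Finset.mem_compl.mp i₀.2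
    have := congrFun hg (i₀ : Fin n)
    rw [Finset.sum_apply] at this
    rw [Finset.sum_eq_single i₀] at this
    · rw [Pi.smul_apply, smul_eq_mul] at this
      have h1 : f i₀ (i₀ : Fin n) = 1 := by
        show d (i₀ : Fin n) (i₀ : Fin n) = 1
        rw [hdval _ _ h₀, if_pos rfl]
      rw [h1, mul_one] at this
      simpa using this
    · intro k _ hk
      have h2 : f k (i₀ : Fin n) = 0 := by
        show d (k : Fin n) (i₀ : Fin n) = 0
        rw [hdval _ _ h₀, if_neg]
        intro hc
        exact hk (Subtype.ext hc.symm)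
      rw [Pi.smul_apply, h2, smul_zero]
    · simp
  have hle : Submodule.span (ZMod p) (Set.range f) ≤ HX := by
    rw [Submodule.span_le]
    rintro x ⟨i, rfl⟩
    exact hdH i
  have hfr : Module.finrank (ZMod p) (Submodule.span (ZMod p) (Set.range f))
      = Fintype.card (σ₀ᶜ : Finset (Fin n)) := finrank_span_eq_card hind
  have hcc : Fintype.card (σ₀ᶜ : Finset (Fin n)) = n - σ₀.card := by
    rw [Fintype.card_coe, Finset.card_compl, Fintype.card_fin]
  have hq : Module.finrank (ZMod p) ((Fin n → ZMod p) ⧸ HX) = σ₀.card := by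
    rw [Module.finrank_eq_card_basis B, Fintype.card_coe]
  have hsum := Submodule.finrank_quotient_add_finrank HX
  rw [hq] at hsum
  have hG : Module.finrank (ZMod p) (Fin n → ZMod p) = n := by
    simp [Module.finrank_pi]
  rw [hG] at hsum
  have hcardle : σ₀.card ≤ n := by
    calc σ₀.card ≤ Fintype.card (Fin n) := Finset.card_le_univ σ₀
      _ = n := Fintype.card_fin n
  have heq : Submodule.span (ZMod p) (Set.range f) = HX := by
    apply Submodule.eq_of_le_of_finrank_le hle
    rw [hfr, hcc]
    omega
  refine ⟨Set.range f, heq, (linearIndepOn_id_range_iff hind.injective).mpr hind, ?_⟩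
  rintro a ⟨i, rfl⟩
  exact hdwt i

variable (HX)

def qv (i : Fin n) : (Fin n → ZMod p) ⧸ HX := Submodule.Quotient.mk (Pi.single i 1)

def pSetoid : Setoid (Fin n) where
  r i j := ∃ c : ZMod p, c ≠ 0 ∧ qv HX i = c • qv HX j
  iseqv := by
    constructor
    · intro i; exact ⟨1, one_ne_zero, (one_smul _ _).symm⟩
    · rintro i j ⟨c, hc, h⟩
      refine ⟨c⁻¹, inv_ne_zero hc, ?_⟩
      rw [h, ← smul_assoc, smul_eq_mul, inv_mul_cancel₀ hc, one_smul]
    · rintro i j k ⟨c, hc, h⟩ ⟨d, hd, h'⟩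
      refine ⟨c * d, mul_ne_zero hc hd, ?_⟩
      rw [h, h', ← smul_assoc, smul_eq_mul]

noncomputable def prep (i : Fin n) : Fin n := (Quotient.mk (pSetoid HX) i).out

lemma prep_rel (i : Fin n) : (pSetoid HX).r (prep HX i) i :=
  Quotient.exact (Quotient.out_eq (Quotient.mk (pSetoid HX) i))

lemma prep_eq_of_rel {i j : Fin n} (h : (pSetoid HX).r i j) : prep HX i = prep HX j :=
  congrArg Quotient.out (Quotient.sound h)

lemma prep_idem (i : Fin n) : prep HX (prep HX i) = prep HX i :=
  prep_eq_of_rel HX (prep_rel HX i)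

open scoped Classical in
noncomputable def sig0 : Finset (Fin n) :=
  Finset.univ.filter fun i => prep HX i = i ∧ qv HX i ≠ 0

lemma mem_sig0 {i : Fin n} : i ∈ sig0 HX ↔ prep HX i = i ∧ qv HX i ≠ 0 := by
  classical
  simp [sig0]

lemma rel_of_mem {s : Set (Fin n → ZMod p)} (hs : Submodule.span (ZMod p) s = HX)
    (h2 : ∀ a ∈ s, hwt a ≤ 2) {u : Fin n → ZMod p} (hu : u ∈ s)
    {j₁ j₂ : Fin n} (h1 : u j₁ ≠ 0) (hj2 : u j₂ ≠ 0) : (pSetoid HX).r j₁ j₂ := by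
  classical
  by_cases he : j₁ = j₂
  · subst he; exact (pSetoid HX).refl j₁
  have huH : u ∈ HX := hs ▸ Submodule.subset_span hu
  have hdecomp : u = Pi.single j₁ (u j₁) + Pi.single j₂ (u j₂) := by
    funext j
    by_cases e1 : j = j₁
    · subst e1; simp [Pi.single_apply, he]
    · by_cases e2 : j = j₂
      · subst e2; simp [Pi.single_apply, e1]
      · have hj0 : u j = 0 := by
          by_contra hj0
          have hsub : ({j₁, j₂, j} : Finset (Fin n)) ⊆
              Finset.univ.filter (fun t => u t ≠ 0) := by
            intro t ht
            simp only [Finset.mem_insert, Finset.mem_singleton] at ht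
            simp only [mem_filter, mem_univ, true_and]
            rcases ht with rfl|rfl|rfl <;> assumption
          have hc3 : ({j₁, j₂, j} : Finset (Fin n)).card = 3 := by
            rw [Finset.card_insert_of_notMem, Finset.card_insert_of_notMem,
              Finset.card_singleton]
            · simp only [Finset.mem_singleton]; exact fun hcon => e2 hcon.symm
            · simp only [Finset.mem_insert, Finset.mem_singleton]
              push_neg
              exact ⟨he, fun hcon => e1 hcon.symm⟩
          have hle := Finset.card_le_card hsub
          rw [hc3] at hle
          have := le_trans hle (h2 u hu)
          omega
        simp [Pi.single_apply, e1, e2, hj0]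
  have hmk : (Submodule.Quotient.mk u : (Fin n → ZMod p) ⧸ HX) = 0 :=
    (Submodule.Quotient.mk_eq_zero HX).mpr huH
  have hx1 : (Pi.single j₁ (u j₁) : Fin n → ZMod p)
      = u j₁ • (Pi.single j₁ 1 : Fin n → ZMod p) := by
    rw [← Pi.single_smul, smul_eq_mul, mul_one]
  have hx2 : (Pi.single j₂ (u j₂) : Fin n → ZMod p)
      = u j₂ • (Pi.single j₂ 1 : Fin n → ZMod p) := by
    rw [← Pi.single_smul, smul_eq_mul, mul_one]
  have h0 : u j₁ • qv HX j₁ + u j₂ • qv HX j₂ = 0 := by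
    rw [qv, qv, ← Submodule.Quotient.mk_smul, ← Submodule.Quotient.mk_smul,
      ← Submodule.Quotient.mk_add, ← hx1, ← hx2, ← hdecomp]
    exact hmk
  refine ⟨(u j₁)⁻¹ * (-(u j₂)), mul_ne_zero (inv_ne_zero h1) (neg_ne_zero.mpr hj2), ?_⟩
  have h3 : u j₁ • qv HX j₁ = (-(u j₂)) • qv HX j₂ := by
    rw [neg_smul]; exact eq_neg_of_add_eq_zero_left h0
  calc qv HX j₁ = (u j₁)⁻¹ • (u j₁ • qv HX j₁) := by
        rw [← smul_assoc, smul_eq_mul, inv_mul_cancel₀ h1, one_smul]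
    _ = (u j₁)⁻¹ • ((-(u j₂)) • qv HX j₂) := by rw [h3]
    _ = ((u j₁)⁻¹ * (-(u j₂))) • qv HX j₂ := by rw [← smul_assoc, smul_eq_mul]

open scoped Classical in
lemma restr_mem {s : Set (Fin n → ZMod p)} (hs : Submodule.span (ZMod p) s = HX)
    (h2 : ∀ a ∈ s, hwt a ≤ 2) {v : Fin n → ZMod p} (hv : v ∈ HX) (i : Fin n) :
    (fun j => if (pSetoid HX).r j i then v j else 0) ∈ HX := by
  rw [← hs] at hv
  induction hv using Submodule.span_induction with
  | mem u hu =>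
    by_cases h : ∃ j, u j ≠ 0 ∧ (pSetoid HX).r j i
    · have heq : (fun j => if (pSetoid HX).r j i then u j else 0) = u := by
        funext j
        by_cases hr : (pSetoid HX).r j i
        · rw [if_pos hr]
        · rw [if_neg hr]
          have : u j = 0 := by
            by_contra hj
            obtain ⟨j', hj', hr'⟩ := h
            exact hr ((pSetoid HX).trans (rel_of_mem HX hs h2 hu hj hj') hr')
          exact this.symm
      rw [heq]
      exact hs ▸ Submodule.subset_span hu
    · push_neg at h
      have heq : (fun j => if (pSetoid HX).r j i then u j else 0)
          = (0 : Fin n → ZMod p) := by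
        funext j
        by_cases hr : (pSetoid HX).r j i
        · rw [if_pos hr]
          by_contra hj
          exact h j hj hr
        · rw [if_neg hr]; rfl
      rw [heq]
      exact HX.zero_mem
  | zero =>
    have heq : (fun j => if (pSetoid HX).r j i then (0 : Fin n → ZMod p) j else 0)
        = (0 : Fin n → ZMod p) := by
      funext j; split <;> rfl
    rw [heq]; exact HX.zero_mem
  | add x y hx hy ihx ihy =>
    have heq : (fun j => if (pSetoid HX).r j i then (x + y) j else 0)
        = (fun j => if (pSetoid HX).r j i then x j else 0)
          + (fun j => if (pSetoid HX).r j i then y j else 0) := by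
      funext j
      by_cases hr : (pSetoid HX).r j i <;> simp [hr]
    rw [heq]; exact HX.add_mem ihx ihy
  | smul c x hx ih =>
    have heq : (fun j => if (pSetoid HX).r j i then (c • x) j else 0)
        = c • (fun j => if (pSetoid HX).r j i then x j else 0) := by
      funext j
      by_cases hr : (pSetoid HX).r j i <;> simp [hr]
    rw [heq]; exact HX.smul_mem c ih

lemma mk_eq_sum (v : Fin n → ZMod p) :
    (Submodule.Quotient.mk v : (Fin n → ZMod p) ⧸ HX) = ∑ j, v j • qv HX j := by
  conv_lhs => rw [← Finset.univ_sum_single v]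
  have h0 : (Submodule.Quotient.mk (∑ j, Pi.single j (v j)) : (Fin n → ZMod p) ⧸ HX)
      = HX.mkQ (∑ j, Pi.single j (v j)) := rfl
  rw [h0, map_sum]
  apply Finset.sum_congr rfl
  intro j _
  have h1 : (Pi.single j (v j) : Fin n → ZMod p)
      = v j • (Pi.single j 1 : Fin n → ZMod p) := by
    rw [← Pi.single_smul, smul_eq_mul, mul_one]
  rw [h1, map_smul]
  rfl

lemma qv_mem_span (j : Fin n) :
    qv HX j ∈ Submodule.span (ZMod p)
      (Set.range fun k : (sig0 HX : Finset (Fin n)) => qv HX (k : Fin n)) := by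
  by_cases h0 : qv HX j = 0
  · rw [h0]; exact Submodule.zero_mem _
  · obtain ⟨c, hc, hq⟩ := (pSetoid HX).symm (prep_rel HX j)
    have hne : qv HX (prep HX j) ≠ 0 := by
      intro hz; rw [hz, smul_zero] at hq; exact h0 hq
    have hmem : prep HX j ∈ sig0 HX := (mem_sig0 HX).mpr ⟨prep_idem HX j, hne⟩
    rw [hq]
    exact Submodule.smul_mem _ _ (Submodule.subset_span ⟨⟨prep HX j, hmem⟩, rfl⟩)

lemma span_top : ⊤ ≤ Submodule.span (ZMod p)
    (Set.range fun k : (sig0 HX : Finset (Fin n)) => qv HX (k : Fin n)) := by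
  intro x _
  obtain ⟨v, rfl⟩ := Submodule.Quotient.mk_surjective HX x
  rw [mk_eq_sum]
  exact Submodule.sum_mem _ fun j _ => Submodule.smul_mem _ _ (qv_mem_span HX j)

lemma indep {s : Set (Fin n → ZMod p)} (hs : Submodule.span (ZMod p) s = HX)
    (h2 : ∀ a ∈ s, hwt a ≤ 2) :
    LinearIndependent (ZMod p)
      (fun k : (sig0 HX : Finset (Fin n)) => qv HX (k : Fin n)) := by
  classical
  rw [Fintype.linearIndependent_iff]
  intro g hg k₀
  set v : Fin n → ZMod p := yvec (sig0 HX) g with hv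
  have hmkv : (Submodule.Quotient.mk v : (Fin n → ZMod p) ⧸ HX) = 0 := by
    rw [hv, yvec]
    have h0 : (Submodule.Quotient.mk (∑ k : sig0 HX, Pi.single (k : Fin n) (g k))
        : (Fin n → ZMod p) ⧸ HX) = HX.mkQ _ := rfl
    rw [h0, map_sum]
    rw [← hg]
    apply Finset.sum_congr rfl
    intro k _
    have h1 : (Pi.single (k : Fin n) (g k) : Fin n → ZMod p)
        = g k • (Pi.single (k : Fin n) 1 : Fin n → ZMod p) := by
      rw [← Pi.single_smul, smul_eq_mul, mul_one]
    rw [h1, map_smul]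
    rfl
  have hvH : v ∈ HX := (Submodule.Quotient.mk_eq_zero HX).mp hmkv
  have hrmem := restr_mem HX hs h2 hvH (k₀ : Fin n)
  have heq : (fun j => if (pSetoid HX).r j (k₀ : Fin n) then v j else 0)
      = Pi.single (k₀ : Fin n) (g k₀) := by
    funext j
    by_cases hr : (pSetoid HX).r j (k₀ : Fin n)
    · rw [if_pos hr]
      by_cases hj : j ∈ sig0 HX
      · have hj' : j = (k₀ : Fin n) := by
          have ha := ((mem_sig0 HX).mp hj).1
          have hb := ((mem_sig0 HX).mp k₀.2).1
          rw [← ha, ← hb]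
          exact prep_eq_of_rel HX hr
        subst hj'
        rw [hv, yvec_apply, dif_pos hj, Pi.single_eq_same]
      · rw [hv, yvec_apply, dif_neg hj, Pi.single_apply, if_neg]
        intro hc
        exact hj (hc ▸ k₀.2)
    · rw [if_neg hr, Pi.single_apply, if_neg]
      · intro hc
        subst hc
        exact hr ((pSetoid HX).refl _)
  rw [heq] at hrmem
  have hz : g k₀ • qv HX (k₀ : Fin n) = 0 := by
    have h1 : (Pi.single (k₀ : Fin n) (g k₀) : Fin n → ZMod p)
        = g k₀ • (Pi.single (k₀ : Fin n) 1 : Fin n → ZMod p) := by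
      rw [← Pi.single_smul, smul_eq_mul, mul_one]
    have := (Submodule.Quotient.mk_eq_zero HX).mpr hrmem
    rw [h1] at this
    rw [qv, ← Submodule.Quotient.mk_smul]
    exact this
  rcases smul_eq_zero.mp hz with h | h
  · exact h
  · exact absurd h ((mem_sig0 HX).mp k₀.2).2

lemma repr_vanish (B : Module.Basis (sig0 HX : Finset (Fin n)) (ZMod p) ((Fin n → ZMod p) ⧸ HX))
    (hB : ∀ k : (sig0 HX : Finset (Fin n)), B k = qv HX (k : Fin n))
    (y : Fin n → ZMod p) (k : (sig0 HX : Finset (Fin n)))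
    (hk : ∀ j, y j ≠ 0 → ¬ (pSetoid HX).r j (k : Fin n)) :
    B.repr (Submodule.Quotient.mk y) k = 0 := by
  classical
  rw [mk_eq_sum, map_sum, Finsupp.finset_sum_apply]
  apply Finset.sum_eq_zero
  intro j _
  rw [map_smul]
  by_cases hyj : y j = 0
  · rw [hyj]; simp
  · have hnr := hk j hyj
    by_cases h0 : qv HX j = 0
    · rw [h0]; simp
    · obtain ⟨c, hc, hq⟩ := (pSetoid HX).symm (prep_rel HX j)
      have hne : qv HX (prep HX j) ≠ 0 := by
        intro hz; rw [hz, smul_zero] at hq; exact h0 hq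
      have hmem : prep HX j ∈ sig0 HX := (mem_sig0 HX).mpr ⟨prep_idem HX j, hne⟩
      have hqB : qv HX j = c • B ⟨prep HX j, hmem⟩ := by rw [hB]; exact hq
      have hmk : (⟨prep HX j, hmem⟩ : (sig0 HX : Finset (Fin n))) ≠ k := by
        intro hcon
        apply hnr
        have hpk : prep HX j = (k : Fin n) := congrArg Subtype.val hcon
        exact hpk ▸ ((pSetoid HX).symm (prep_rel HX j))
      rw [hqB, map_smul, Module.Basis.repr_self, Finsupp.smul_apply, Finsupp.smul_apply,
        Finsupp.single_eq_of_ne' hmk, smul_zero, smul_zero]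

lemma card_le_hwt (B : Module.Basis (sig0 HX : Finset (Fin n)) (ZMod p) ((Fin n → ZMod p) ⧸ HX))
    (hB : ∀ k : (sig0 HX : Finset (Fin n)), B k = qv HX (k : Fin n))
    (y : Fin n → ZMod p) :
    (B.repr (Submodule.Quotient.mk y)).support.card ≤ hwt y := by
  classical
  have hex : ∀ k ∈ (B.repr (Submodule.Quotient.mk y)).support,
      ∃ j, y j ≠ 0 ∧ (pSetoid HX).r j (k : Fin n) := by
    intro k hk
    by_contra hcon
    push_neg at hcon
    exact (Finsupp.mem_support_iff.mp hk) (repr_vanish HX B hB y k hcon)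
  unfold hwt
  refine Finset.card_le_card_of_injOn
    (fun k => if h : ∃ j, y j ≠ 0 ∧ (pSetoid HX).r j (k : Fin n) then h.choose else (k : Fin n))
    ?_ ?_
  · intro k hk
    simp only [dif_pos (hex k hk)]
    simp only [Finset.mem_coe, mem_filter, mem_univ, true_and]
    exact (hex k hk).choose_spec.1
  · intro k₁ h₁ k₂ h₂ hFe
    have h₁' := Finset.mem_coe.mp h₁
    have h₂' := Finset.mem_coe.mp h₂
    simp only [dif_pos (hex k₁ h₁'), dif_pos (hex k₂ h₂')] at hFe
    have s₁ := (hex k₁ h₁').choose_spec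
    have s₂ := (hex k₂ h₂').choose_spec
    have hr12 : (pSetoid HX).r (k₁ : Fin n) (k₂ : Fin n) :=
      (pSetoid HX).trans ((pSetoid HX).symm s₁.2) (hFe ▸ s₂.2)
    have ha := ((mem_sig0 HX).mp k₁.2).1
    have hb := ((mem_sig0 HX).mp k₂.2).1
    apply Subtype.ext
    rw [← ha, ← hb]
    exact prep_eq_of_rel HX hr12

end aux

/-- a subspace `H_X ≤ G` respects weight — i.e., there is `σ₀ ⊆ Fin n` whose
standard-basis-vector cosets form a basis of `G/H_X` in which the number of nonzero
coefficients of every coset `a + H_X` equals `min {wt(a + h) | h ∈ H_X}` — iff `H_X` admits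
a basis all of whose elements have Hamming weight at most `2`. -/
theorem stmt18 (p n : ℕ) [Fact p.Prime]
    (HX : Submodule (ZMod p) (Fin n → ZMod p)) :
    (∃ (σ₀ : Finset (Fin n)) (B : Module.Basis σ₀ (ZMod p) ((Fin n → ZMod p) ⧸ HX)),
      (∀ i : σ₀, B i = Submodule.Quotient.mk (Pi.single (i : Fin n) (1 : ZMod p))) ∧
      ∀ a : Fin n → ZMod p,
        sInf {w | ∃ h ∈ HX, hwt (a + h) = w}
          = (B.repr (Submodule.Quotient.mk a)).support.card)
    ↔ (∃ s : Set (Fin n → ZMod p),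
        Submodule.span (ZMod p) s = HX ∧
        LinearIndependent (ZMod p) ((↑) : s → (Fin n → ZMod p)) ∧
        ∀ a ∈ s, hwt a ≤ 2) := by
  constructor
  · rintro ⟨σ₀, B, hB, hmain⟩
    exact forward_dir B hB hmain
  · rintro ⟨s, hs, hind, h2⟩
    set B := Module.Basis.mk (indep HX hs h2) (span_top HX) with hBdef
    have hB : ∀ i : (sig0 HX : Finset (Fin n)),
        B i = Submodule.Quotient.mk (Pi.single (i : Fin n) (1 : ZMod p)) := by
      intro k
      rw [hBdef, Module.Basis.mk_apply]
      rfl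
    refine ⟨sig0 HX, B, hB, ?_⟩
    intro a
    apply le_antisymm
    · exact sInf_le_card B hB a
    · apply le_csInf
      · exact ⟨hwt a, 0, HX.zero_mem, by rw [add_zero]⟩
      · rintro w ⟨h, hH, rfl⟩
        have hmkeq : (Submodule.Quotient.mk (a + h) : (Fin n → ZMod p) ⧸ HX)
            = Submodule.Quotient.mk a := by
          rw [Submodule.Quotient.eq]
          simpa using hH
        calc (B.repr (Submodule.Quotient.mk a)).support.card
            = (B.repr (Submodule.Quotient.mk (a + h))).support.card := by rw [hmkeq]
          _ ≤ hwt (a + h) := card_le_hwt HX B hB (a + h)
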